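/- arXiv:2605.15738 — 4 statements merged into one kernel-verified Lean document; each statement's English description precedes it below -/
import Mathlib

section
/- Let Γ be a connected non-complete graph with largest Laplacian eigenvalue μₙ, U a vertex cut with components H₁,…,H_c of Γ−U, and e_i the number of edges from H_i to U. Then μₙ > e_i/|H_i| for every i ∈ {1,…,c}. -/
open Finset Matrix BigOperators

/-- The eigenvalues of a Hermitian matrix, sorted in nondecreasing order. -/
noncomputable def sortedEigs {V : Type*} [Fintype V] [DecidableEq V]
    {A : Matrix V V ℝ} (hA : A.IsHermitian) : Fin (Fintype.card V) → ℝ :=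
  (hA.eigenvalues ∘ (Fintype.equivFin V).symm) ∘
    Tuple.sort (hA.eigenvalues ∘ (Fintype.equivFin V).symm)

/-- `eig hA k` is the `(k+1)`-st smallest eigenvalue `μ_{k+1}` of `A` (0 outside range). -/
noncomputable def eig {V : Type*} [Fintype V] [DecidableEq V]
    {A : Matrix V V ℝ} (hA : A.IsHermitian) (k : ℕ) : ℝ :=
  if h : k < Fintype.card V then sortedEigs hA ⟨k, h⟩ else 0

/-- The number of connected components of `Γ - U`. -/
noncomputable def numComponents {V : Type*} [Fintype V] (G : SimpleGraph V) (U : Finset V) : ℕ :=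
  Nat.card (G.induce ((↑U : Set V)ᶜ)).ConnectedComponent

/-- The toughness of a graph. -/
noncomputable def toughness {V : Type*} [Fintype V] (G : SimpleGraph V) : ℝ :=
  sInf {t : ℝ | ∃ U : Finset V, 1 < numComponents G U ∧
    t = (U.card : ℝ) / (numComponents G U : ℝ)}

/-- The number of vertices of a component `H` of `Γ - U`. -/
noncomputable def compSize {V : Type*} [Fintype V] {G : SimpleGraph V} {U : Finset V}
    (C : (G.induce ((↑U : Set V)ᶜ)).ConnectedComponent) : ℕ :=
  Nat.card C.supp

/-- The number of edges joining a component `H` of `Γ - U` to `U`. -/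
noncomputable def edgesToCut {V : Type*} [Fintype V] {G : SimpleGraph V} {U : Finset V}
    (C : (G.induce ((↑U : Set V)ᶜ)).ConnectedComponent) : ℕ :=
  Nat.card {p : ((↑U : Set V)ᶜ : Set V) × V // p.1 ∈ C.supp ∧ p.2 ∈ U ∧ G.Adj p.1.1 p.2}

lemma my_rayleigh {n : Type*} [Fintype n] [DecidableEq n] {A : Matrix n n ℝ}
    (hA : A.IsHermitian) {μ : ℝ} (hμ : ∀ i, hA.eigenvalues i ≤ μ) (x : n → ℝ) :
    x ⬝ᵥ A *ᵥ x ≤ μ * (x ⬝ᵥ x) ∧ (x ⬝ᵥ A *ᵥ x = μ * (x ⬝ᵥ x) → A *ᵥ x = μ • x) := by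
  set Um : Matrix n n ℝ := (hA.eigenvectorUnitary : Matrix n n ℝ) with hUm
  have hstar : star Um = Umᵀ := by
    rw [Matrix.star_eq_conjTranspose, Matrix.conjTranspose_eq_transpose_of_trivial]
  set y : n → ℝ := star Um *ᵥ x with hy
  have key : ∀ w : n → ℝ, x ⬝ᵥ (Um *ᵥ w) = y ⬝ᵥ w := by
    intro w
    rw [Matrix.dotProduct_mulVec, hy, hstar, ← Matrix.mulVec_transpose]
  have hUy : Um *ᵥ y = x := by
    rw [hy, Matrix.mulVec_mulVec, (Matrix.mem_unitaryGroup_iff).mp hA.eigenvectorUnitary.2,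
      Matrix.one_mulVec]
  have hAx : A *ᵥ x = Um *ᵥ (Matrix.diagonal hA.eigenvalues *ᵥ y) := by
    have hof : (RCLike.ofReal ∘ hA.eigenvalues : n → ℝ) = hA.eigenvalues := funext fun i => rfl
    conv_lhs => rw [hA.spectral_theorem, Unitary.conjStarAlgAut_apply, hof]
    simp only [← Matrix.mulVec_mulVec, hy]
    congr 1
  have hxAx : x ⬝ᵥ A *ᵥ x = ∑ i, hA.eigenvalues i * (y i * y i) := by
    rw [hAx, key]
    simp [dotProduct, Matrix.mulVec_diagonal]
    ring_nf
    congr 1; ext i; ring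
  have hxx : x ⬝ᵥ x = ∑ i, y i * y i :=
    calc x ⬝ᵥ x = x ⬝ᵥ (Um *ᵥ y) := by rw [hUy]
    _ = y ⬝ᵥ y := key y
  have hle : ∀ i, hA.eigenvalues i * (y i * y i) ≤ μ * (y i * y i) :=
    fun i => mul_le_mul_of_nonneg_right (hμ i) (mul_self_nonneg _)
  constructor
  · rw [hxAx, hxx, Finset.mul_sum]
    exact Finset.sum_le_sum fun i _ => hle i
  · intro heq
    rw [hxAx, hxx, Finset.mul_sum] at heq
    have hall : ∀ i ∈ Finset.univ, hA.eigenvalues i * (y i * y i) = μ * (y i * y i) := by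
      by_contra hc
      push_neg at hc
      obtain ⟨i, hi, hne⟩ := hc
      exact absurd heq (ne_of_lt (Finset.sum_lt_sum (fun j _ => hle j)
        ⟨i, hi, lt_of_le_of_ne (hle i) hne⟩))
    have hDy : Matrix.diagonal hA.eigenvalues *ᵥ y = μ • y := by
      ext i
      have := hall i (Finset.mem_univ i)
      rcases eq_or_ne (y i) 0 with h0 | h0
      · simp [Matrix.mulVec_diagonal, h0]
      · have heig : hA.eigenvalues i = μ :=
          mul_right_cancel₀ (mul_self_ne_zero.mpr h0) this
        simp [Matrix.mulVec_diagonal, heig]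
    rw [hAx, hDy, Matrix.mulVec_smul, hUy]

lemma eig_last_ge {V : Type*} [Fintype V] [DecidableEq V]
    {A : Matrix V V ℝ} (hA : A.IsHermitian) (hpos : 0 < Fintype.card V) (i : V) :
    hA.eigenvalues i ≤ eig hA (Fintype.card V - 1) := by
  have hlt : Fintype.card V - 1 < Fintype.card V := Nat.sub_lt hpos one_pos
  rw [eig, dif_pos hlt]
  set g := hA.eigenvalues ∘ (Fintype.equivFin V).symm with hg
  have hmono := Tuple.monotone_sort g
  set σ := Tuple.sort g
  have h1 : hA.eigenvalues i = (g ∘ σ) (σ⁻¹ (Fintype.equivFin V i)) := by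
    simp [hg, Function.comp_apply]
  rw [h1]
  exact hmono (by rw [Fin.le_def]; exact Nat.le_pred_of_lt (Fin.is_lt _))

lemma exists_boundary_edge {V : Type*} {G : SimpleGraph V} (S : Set V) {a b : V}
    (w : G.Walk a b) : a ∈ S → b ∉ S → ∃ u v, G.Adj u v ∧ u ∈ S ∧ v ∉ S := by
  induction w with
  | nil => intro ha hb; exact absurd ha hb
  | @cons a c b h p ih =>
    intro ha hb
    by_cases hc : c ∈ S
    · exact ih hc hb
    · exact ⟨a, c, h, ha, hc⟩


/-- For any vertex cut `U` and any component `H` of `Γ - U`, `μ_n > e(H)/|H|`. -/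
theorem mu_n_gt_avg_degree {V : Type*} [Fintype V] [DecidableEq V]
    (G : SimpleGraph V) [DecidableRel G.Adj]
    (hconn : G.Connected) (hnc : G ≠ ⊤)
    (U : Finset V) (hcut : 1 < numComponents G U)
    (C : (G.induce ((↑U : Set V)ᶜ)).ConnectedComponent) :
    eig (Matrix.PosSemidef.isHermitian (G.posSemidef_lapMatrix ℝ)) (Fintype.card V - 1) >
      (edgesToCut C : ℝ) / (compSize C : ℝ) := by
  classical
  set hL := Matrix.PosSemidef.isHermitian (G.posSemidef_lapMatrix ℝ) with hLdef
  -- a representative of C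
  obtain ⟨c0, hc0⟩ := C.exists_rep
  have hpos : 0 < Fintype.card V := Fintype.card_pos_iff.mpr ⟨c0.1⟩
  set μ : ℝ := eig hL (Fintype.card V - 1) with hμdef
  -- the vertex set of the component, as a set of V
  set Sset : Set V := {v : V | ∃ h : v ∈ ((↑U : Set V)ᶜ), (G.induce ((↑U : Set V)ᶜ)).connectedComponentMk ⟨v, h⟩ = C}
    with hSset
  have hSU : ∀ v ∈ Sset, v ∉ (↑U : Set V) := fun v hv => hv.choose
  have hc0S : c0.1 ∈ Sset := ⟨c0.2, by rw [Subtype.coe_eta]; exact hc0⟩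
  have hclose : ∀ a b : V, a ∈ Sset → G.Adj a b → b ∉ (↑U : Set V) → b ∈ Sset := by
    intro a b ha hab hb
    obtain ⟨has, hmk⟩ := ha
    have hbs : b ∈ ((↑U : Set V)ᶜ) := hb
    refine ⟨hbs, ?_⟩
    rw [← hmk]
    exact (SimpleGraph.ConnectedComponent.connectedComponentMk_eq_of_adj (G := G.induce ((↑U : Set V)ᶜ)) (v := ⟨a, has⟩) (w := ⟨b, hbs⟩) hab).symm
  -- the test vector
  set x : V → ℝ := fun v => if v ∈ Sset then 1 else 0 with hx
  have hxnn : ∀ v, 0 ≤ x v := fun v => by rw [hx]; positivity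
  -- norm squared
  have hxx : x ⬝ᵥ x = (compSize C : ℝ) := by
    have h1 : x ⬝ᵥ x = ∑ v : V, if v ∈ Sset then (1:ℝ) else 0 := by
      simp only [dotProduct, hx]
      congr 1; ext v
      by_cases h : v ∈ Sset <;> simp [h]
    rw [h1, Finset.sum_boole]
    norm_cast
    rw [compSize]
    have hb : Function.Bijective (fun w : C.supp => (⟨w.1.1, w.1.2, w.2⟩ : Sset)) := by
      constructor
      · intro w1 w2 h
        have h2 := congrArg Subtype.val h
        simp only at h2
        exact Subtype.ext (Subtype.ext h2)
      · rintro ⟨v, hv⟩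
        exact ⟨⟨⟨v, hv.choose⟩, hv.choose_spec⟩, rfl⟩
    rw [Nat.card_eq_of_bijective _ hb, Nat.card_eq_fintype_card, Fintype.card_subtype]
  -- quadratic form equals number of boundary edges
  have hLx : x ⬝ᵥ (G.lapMatrix ℝ *ᵥ x) = (edgesToCut C : ℝ) := by
    rw [← Matrix.toLinearMap₂'_apply', G.lapMatrix_toLinearMap₂' (R := ℝ) x]
    have hterm : ∀ i j : V, (if G.Adj i j then (x i - x j)^2 else 0) =
        (if i ∈ Sset ∧ j ∈ (↑U : Set V) ∧ G.Adj i j then (1:ℝ) else 0) +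
        (if j ∈ Sset ∧ i ∈ (↑U : Set V) ∧ G.Adj i j then (1:ℝ) else 0) := by
      intro i j
      by_cases hadj : G.Adj i j
      · by_cases hi : i ∈ Sset <;> by_cases hj : j ∈ Sset
        · rw [if_pos hadj, hx]
          simp only [if_pos hi, if_pos hj, sub_self, ne_eq]
          rw [if_neg (fun h => hSU j hj h.2.1), if_neg (fun h => hSU i hi h.2.1)]
          norm_num
        · have hjU : j ∈ (↑U : Set V) := by
            by_contra hjU
            exact hj (hclose i j hi hadj hjU)
          rw [if_pos hadj, hx]
          simp only [if_pos hi, if_neg hj]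
          rw [if_pos ⟨hi, hjU, hadj⟩, if_neg (fun h => hj h.1)]
          norm_num
        · have hiU : i ∈ (↑U : Set V) := by
            by_contra hiU
            exact hi (hclose j i hj hadj.symm hiU)
          rw [if_pos hadj, hx]
          simp only [if_neg hi, if_pos hj]
          rw [if_neg (fun h => hi h.1), if_pos ⟨hj, hiU, hadj⟩]
          norm_num
        · rw [if_pos hadj, hx]
          simp only [if_neg hi, if_neg hj]
          rw [if_neg (fun h => hi h.1), if_neg (fun h => hj h.1)]
          norm_num
      · rw [if_neg hadj, if_neg (fun h => hadj h.2.2), if_neg (fun h => hadj h.2.2)]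
        norm_num
    simp only [hterm, Finset.sum_add_distrib]
    have hswap : (∑ i : V, ∑ j : V, if j ∈ Sset ∧ i ∈ (↑U : Set V) ∧ G.Adj i j then (1:ℝ) else 0)
        = ∑ i : V, ∑ j : V, if i ∈ Sset ∧ j ∈ (↑U : Set V) ∧ G.Adj i j then (1:ℝ) else 0 := by
      rw [Finset.sum_comm]
      refine Finset.sum_congr rfl fun i _ => Finset.sum_congr rfl fun j _ => ?_
      congr 1
      simp only [eq_iff_iff]
      constructor
      · rintro ⟨h1, h2, h3⟩; exact ⟨h1, h2, h3.symm⟩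
      · rintro ⟨h1, h2, h3⟩; exact ⟨h1, h2, h3.symm⟩
    rw [hswap]
    have hcount : (∑ i : V, ∑ j : V, if i ∈ Sset ∧ j ∈ (↑U : Set V) ∧ G.Adj i j
        then (1:ℝ) else 0) = (edgesToCut C : ℝ) := by
      have hpr : (∑ i : V, ∑ j : V, if i ∈ Sset ∧ j ∈ (↑U : Set V) ∧ G.Adj i j
          then (1:ℝ) else 0) = ∑ p : V × V,
            if p.1 ∈ Sset ∧ p.2 ∈ (↑U : Set V) ∧ G.Adj p.1 p.2 then (1:ℝ) else 0 :=
        (Fintype.sum_prod_type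
          (f := fun p : V × V => if p.1 ∈ Sset ∧ p.2 ∈ (↑U : Set V) ∧ G.Adj p.1 p.2
            then (1:ℝ) else 0)).symm
      rw [hpr, Finset.sum_boole]
      norm_cast
      rw [edgesToCut]
      have hb : Function.Bijective
          (fun (p : {p : ↥((↑U : Set V)ᶜ) × V // p.1 ∈ C.supp ∧ p.2 ∈ U ∧ G.Adj p.1.1 p.2}) =>
            (⟨(p.1.1.1, p.1.2), ⟨p.1.1.2, p.2.1⟩, p.2.2.1, p.2.2.2⟩ :
              {q : V × V // q.1 ∈ Sset ∧ q.2 ∈ (↑U : Set V) ∧ G.Adj q.1 q.2})) := by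
        constructor
        · rintro ⟨⟨a1, b1⟩, h1⟩ ⟨⟨a2, b2⟩, h2⟩ h
          have h2' := congrArg Subtype.val h
          simp only [Prod.mk.injEq] at h2'
          refine Subtype.ext (Prod.ext (Subtype.ext h2'.1) h2'.2)
        · rintro ⟨⟨a, b⟩, ⟨hS, hU, hadj⟩⟩
          exact ⟨⟨(⟨a, hS.choose⟩, b), hS.choose_spec, hU, hadj⟩, rfl⟩
      rw [Nat.card_eq_of_bijective _ hb, Nat.card_eq_fintype_card, Fintype.card_subtype]
      congr 1
    rw [hcount]
    ring
  -- there is another component, hence a vertex outside Sset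
  have hfin : Finite (G.induce ((↑U : Set V)ᶜ)).ConnectedComponent :=
    Finite.of_fintype _
  have hnontriv : Nontrivial (G.induce ((↑U : Set V)ᶜ)).ConnectedComponent := by
    rw [← Finite.one_lt_card_iff_nontrivial]
    exact hcut
  obtain ⟨D, hD⟩ := exists_ne C
  obtain ⟨w0, hw0⟩ := D.exists_rep
  have hw0S : w0.1 ∉ Sset := by
    rintro ⟨h, hmk⟩
    rw [Subtype.coe_eta] at hmk
    exact hD (by rw [← hw0, ← hmk]; rfl)
  -- a boundary edge from Sset into U
  obtain ⟨p⟩ := hconn.preconnected c0.1 w0.1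
  obtain ⟨a, b, hab, haS, hbS⟩ := exists_boundary_edge Sset p hc0S hw0S
  have hbU : b ∈ (↑U : Set V) := by
    by_contra h
    exact hbS (hclose a b haS hab h)
  -- compSize is positive
  have hcsN : 0 < compSize C := by
    rw [compSize]
    have : Nonempty C.supp := ⟨⟨c0, hc0⟩⟩
    exact Nat.card_pos
  have hcs : 0 < (compSize C : ℝ) := by exact_mod_cast hcsN
  -- Rayleigh
  obtain ⟨hle, heqc⟩ := my_rayleigh hL (fun i => eig_last_ge hL hpos i) x
  rcases lt_or_eq_of_le hle with hlt | heq
  · rw [hLx, hxx] at hlt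
    rw [gt_iff_lt, div_lt_iff₀ hcs]
    exact hlt
  · exfalso
    have hev := congrFun (heqc heq) b
    rw [SimpleGraph.lapMatrix_mulVec_apply] at hev
    have hxb : x b = 0 := if_neg (fun hb => hSU b hb hbU)
    have hsum : (1:ℝ) ≤ ∑ u' ∈ G.neighborFinset b, x u' := by
      have h1 := Finset.single_le_sum (f := x) (fun i _ => hxnn i)
        ((SimpleGraph.mem_neighborFinset G b a).mpr hab.symm)
      calc (1:ℝ) = x a := (if_pos haS).symm
      _ ≤ _ := h1
    rw [Pi.smul_apply, smul_eq_mul, hxb] at hev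
    linarith
end

section
/- Let Γ be a connected non-complete graph with largest Laplacian eigenvalue μₙ, U a vertex cut with components H₁,…,H_c of Γ−U, and e_i the number of edges from H_i to U. Then ∑_{i=1}^{c} e_i/(μₙ − e_i/|H_i|) ≤ |U|. -/
open Finset Matrix BigOperators

lemma eig_max_bound {V : Type*} [Fintype V] [DecidableEq V] [Nonempty V]
    {A : Matrix V V ℝ} (hA : A.IsHermitian) (x : V → ℝ) :
    x ⬝ᵥ A *ᵥ x ≤ eig hA (Fintype.card V - 1) * (x ⬝ᵥ x) := by
  set n := Fintype.card V with hn
  have hn0 : 0 < n := Fintype.card_pos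
  have hlt : n - 1 < n := Nat.sub_lt hn0 one_pos
  set μ := eig hA (n - 1) with hμdef
  have hμ : ∀ i : V, hA.eigenvalues i ≤ μ := by
    intro i
    have h1 : μ = sortedEigs hA ⟨n - 1, hlt⟩ := by rw [hμdef, eig, dif_pos hlt]
    rw [h1]
    set f := hA.eigenvalues ∘ (Fintype.equivFin V).symm with hf
    have hm := Tuple.monotone_sort f
    have h2 : hA.eigenvalues i
        = (f ∘ Tuple.sort f) ((Tuple.sort f).symm ((Fintype.equivFin V) i)) := by
      simp [hf]
    rw [h2]
    exact hm (Fin.mk_le_mk.mpr (Nat.le_sub_one_of_lt ((Tuple.sort f).symm _).isLt)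
      |>.trans_eq rfl) |>.trans_eq rfl
  have hdiag : PosSemidef (diagonal (fun i => μ - hA.eigenvalues i) : Matrix V V ℝ) :=
    posSemidef_diagonal_iff.mpr fun i => sub_nonneg.mpr (hμ i)
  have hU := (Matrix.mem_unitaryGroup_iff).mp (hA.eigenvectorUnitary).2
  have key : μ • (1 : Matrix V V ℝ) - A =
      (hA.eigenvectorUnitary : Matrix V V ℝ) * diagonal (fun i => μ - hA.eigenvalues i)
        * star (hA.eigenvectorUnitary : Matrix V V ℝ) := by
    have hd : (diagonal (fun i => μ - hA.eigenvalues i) : Matrix V V ℝ)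
        = μ • 1 - diagonal (RCLike.ofReal ∘ hA.eigenvalues) := by
      ext i j
      by_cases h : i = j <;>
        simp [h, Matrix.diagonal_apply, Matrix.one_apply, Matrix.smul_apply]
    rw [hd, Matrix.mul_sub, Matrix.sub_mul, ← Unitary.conjStarAlgAut_apply (S := ℝ) (x := diagonal (RCLike.ofReal ∘ hA.eigenvalues)), ← hA.spectral_theorem]
    congr 1
    rw [Matrix.mul_smul, Matrix.mul_one, Matrix.smul_mul]
    rw [hU]
  have hpsd : PosSemidef (μ • (1 : Matrix V V ℝ) - A) := by
    rw [key, Matrix.star_eq_conjTranspose]; exact hdiag.mul_mul_conjTranspose_same _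
  have h2 := hpsd.dotProduct_mulVec_nonneg x
  simp only [star_trivial, sub_mulVec, smul_mulVec, one_mulVec, dotProduct_sub,
    dotProduct_smul, smul_eq_mul] at h2
  linarith

/-- Schur-complement inequality: `∑_i e_i/(μ_n - e_i/|H_i|) ≤ |U|`. -/
theorem schur_complement_cut_bound {V : Type*} [Fintype V] [DecidableEq V]
    (G : SimpleGraph V) [DecidableRel G.Adj]
    (hconn : G.Connected) (hnc : G ≠ ⊤)
    (U : Finset V) (hcut : 1 < numComponents G U) :
    ∑ᶠ C : (G.induce ((↑U : Set V)ᶜ)).ConnectedComponent,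
        (edgesToCut C : ℝ) /
          (eig (Matrix.PosSemidef.isHermitian (G.posSemidef_lapMatrix ℝ)) (Fintype.card V - 1)
            - (edgesToCut C : ℝ) / (compSize C : ℝ))
      ≤ (U.card : ℝ) := by
  classical
  have hV : Nonempty V := hconn.nonempty
  have hquad' : ∀ x : V → ℝ,
      (∑ i : V, ∑ j : V, if G.Adj i j then (x i - x j)^2 else 0) / 2
        ≤ eig (Matrix.PosSemidef.isHermitian (G.posSemidef_lapMatrix ℝ)) (Fintype.card V - 1) * (x ⬝ᵥ x) := by
    intro x
    rw [← SimpleGraph.lapMatrix_toLinearMap₂' ℝ, Matrix.toLinearMap₂'_apply']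
    exact eig_max_bound _ x
  set μ := eig (Matrix.PosSemidef.isHermitian (G.posSemidef_lapMatrix ℝ)) (Fintype.card V - 1) with hμdef
  have hquad := hquad'
  clear hquad'
  set S : Set V := (↑U : Set V)ᶜ with hSdef
  set G' := G.induce S with hG'
  letI : Fintype ↥S := Fintype.ofFinite _
  letI : Fintype G'.ConnectedComponent := Fintype.ofFinite _
  set K := G'.ConnectedComponent with hK
  let cc : ↥S → K := G'.connectedComponentMk
  have hvS : ∀ {v : V}, v ∉ U → v ∈ S := by
    intro v hv; simp [hSdef, hv]
  have hsize : ∀ C : K, compSize C = (univ.filter (fun u : ↥S => cc u = C)).card := by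
    intro C
    rw [compSize, Nat.card_eq_fintype_card, ← Fintype.card_subtype]
    exact Fintype.card_congr (Equiv.subtypeEquivRight (fun u => C.mem_supp_iff u))
  have hedge : ∀ C : K, (edgesToCut C : ℝ)
      = ∑ u ∈ univ.filter (fun u : ↥S => cc u = C), ∑ v : V,
          (if v ∈ U ∧ G.Adj u.1 v then (1:ℝ) else 0) := by
    intro C
    have h1 : edgesToCut C
        = ∑ u : ↥S, ∑ v : V, (if cc u = C ∧ v ∈ U ∧ G.Adj u.1 v then 1 else 0) := by
      rw [edgesToCut, Nat.card_eq_fintype_card, Fintype.card_subtype, card_filter,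
        Fintype.sum_prod_type]
      simp only [SimpleGraph.ConnectedComponent.mem_supp_iff]
      rfl
    rw [h1]
    push_cast
    rw [sum_filter]
    congr 1; ext u
    by_cases h : cc u = C <;> simp [h]
  have hUsum : ∀ f : V → ℝ, ∑ v : V, f v = ∑ v ∈ U, f v + ∑ u : ↥S, f u.1 := by
    intro f
    rw [← Finset.sum_add_sum_compl U f]
    congr 1
    exact Finset.sum_subtype Uᶜ (fun x => by simp [hSdef]) f
  have key : ∀ a : K → ℝ,
      ∑ C : K, (edgesToCut C : ℝ) * (a C - 1)^2
        ≤ μ * ((U.card : ℝ) + ∑ C : K, (compSize C : ℝ) * (a C)^2) := by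
    intro a
    set y : V → ℝ := fun v => if h : v ∈ U then 1 else a (cc ⟨v, hvS h⟩) with hy
    have hyU : ∀ v ∈ U, y v = 1 := fun v hv => dif_pos hv
    have hyS : ∀ u : ↥S, y u.1 = a (cc u) := by
      intro u
      have hu : u.1 ∉ U := fun hmem => (u.2 : u.1 ∈ (↑U : Set V)ᶜ) (Finset.mem_coe.mpr hmem)
      simp only [hy, dif_neg hu]
    set F : V → V → ℝ := fun i j => if G.Adj i j then (y i - y j)^2 else 0 with hF
    have hFsymm : ∀ i j, F i j = F j i := by
      intro i j
      simp only [hF, SimpleGraph.adj_comm G i j]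
      by_cases h : G.Adj j i <;> simp [h]
      ring
    have hUU : ∀ i ∈ U, ∀ j ∈ U, F i j = 0 := by
      intro i hi j hj
      simp only [hF, hyU i hi, hyU j hj, sub_self]
      simp
    have hSS : ∀ u v : ↥S, F u.1 v.1 = 0 := by
      intro u v
      simp only [hF]
      by_cases h : G.Adj u.1 v.1
      · have hadj : G'.Adj u v := by
          rw [hG']; exact h
        have : cc u = cc v := SimpleGraph.ConnectedComponent.sound hadj.reachable
        rw [if_pos h, hyS u, hyS v, this, sub_self]
        ring
      · rw [if_neg h]
    -- main LHS identity
    have hnorm : y ⬝ᵥ y = (U.card : ℝ) + ∑ C : K, (compSize C : ℝ) * (a C)^2 := by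
      rw [dotProduct, hUsum (fun v => y v * y v)]
      congr 1
      · rw [Finset.sum_congr rfl (fun v hv => by rw [hyU v hv, mul_one]), Finset.sum_const,
          nsmul_eq_mul, mul_one]
      · rw [← Finset.sum_fiberwise univ cc (fun u => y u.1 * y u.1)]
        refine Finset.sum_congr rfl fun C _ => ?_
        rw [Finset.sum_congr rfl (fun u hu => by
          rw [hyS u, (Finset.mem_filter.mp hu).2]), Finset.sum_const, nsmul_eq_mul,
          hsize C, sq]
    have hLHS : ∑ i : V, ∑ j : V, F i j
        = 2 * ∑ C : K, (edgesToCut C : ℝ) * (a C - 1)^2 := by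
      rw [hUsum (fun i => ∑ j : V, F i j)]
      have eU : ∑ i ∈ U, ∑ j : V, F i j = ∑ i ∈ U, ∑ v : ↥S, F i v.1 := by
        refine Finset.sum_congr rfl fun i hi => ?_
        rw [hUsum (F i), Finset.sum_eq_zero (fun j hj => hUU i hi j hj), zero_add]
      have eS : ∑ u : ↥S, ∑ j : V, F u.1 j = ∑ u : ↥S, ∑ j ∈ U, F u.1 j := by
        refine Finset.sum_congr rfl fun u _ => ?_
        rw [hUsum (F u.1), Finset.sum_eq_zero (fun v _ => hSS u v), add_zero]
      have eswap : ∑ i ∈ U, ∑ v : ↥S, F i v.1 = ∑ u : ↥S, ∑ j ∈ U, F u.1 j := by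
        rw [Finset.sum_comm]
        exact Finset.sum_congr rfl fun u _ => Finset.sum_congr rfl fun j _ => hFsymm j u.1
      rw [eU, eS, eswap]
      have eval : ∑ u : ↥S, ∑ j ∈ U, F u.1 j
          = ∑ C : K, (edgesToCut C : ℝ) * (a C - 1)^2 := by
        have step1 : ∀ u : ↥S, ∑ j ∈ U, F u.1 j
            = ∑ j : V, (if j ∈ U ∧ G.Adj u.1 j then (a (cc u) - 1)^2 else 0) := by
          intro u
          rw [show (∑ j : V, (if j ∈ U ∧ G.Adj u.1 j then (a (cc u) - 1)^2 else 0))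
              = ∑ j ∈ U, (if G.Adj u.1 j then (a (cc u) - 1)^2 else 0) from by
            simp only [ite_and]
            rw [Finset.sum_ite_mem univ U, univ_inter]]
          refine Finset.sum_congr rfl fun j hj => ?_
          by_cases hadj : G.Adj u.1 j
          · simp only [hF, if_pos hadj, hyS u, hyU j hj]
          · simp [hF, hadj]
        rw [Finset.sum_congr rfl (fun u _ => step1 u),
          ← Finset.sum_fiberwise univ cc
            (fun u => ∑ j : V, (if j ∈ U ∧ G.Adj u.1 j then (a (cc u) - 1)^2 else 0))]
        refine Finset.sum_congr rfl fun C _ => ?_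
        rw [hedge C, Finset.sum_mul]
        refine Finset.sum_congr rfl fun u hu => ?_
        have hcu := (Finset.mem_filter.mp hu).2
        rw [Finset.sum_mul]
        refine Finset.sum_congr rfl fun j _ => ?_
        by_cases h : j ∈ U ∧ G.Adj u.1 j <;> simp [h, hcu]
      rw [eval]
      ring
    have hmain := hquad y
    rw [show (∑ i : V, ∑ j : V, if G.Adj i j then (y i - y j)^2 else 0)
        = ∑ i : V, ∑ j : V, F i j from rfl, hLHS, hnorm] at hmain
    linarith
  -- sizes are positive
  have hm1 : ∀ C : K, (1:ℝ) ≤ (compSize C : ℝ) := by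
    intro C
    have ⟨u, hu⟩ := C.exists_rep
    have : 0 < (univ.filter (fun u : ↥S => cc u = C)).card :=
      Finset.card_pos.mpr ⟨u, Finset.mem_filter.mpr ⟨Finset.mem_univ u, hu⟩⟩
    rw [hsize C] at *
    exact_mod_cast this
  -- boundary edge existence
  have hbd : ∀ (x w : V) (p : G.Walk x w) (hx : x ∈ S),
      (∀ hw : w ∈ S, cc ⟨w, hw⟩ ≠ cc ⟨x, hx⟩) →
      ∃ (u : ↥S) (v : V), cc u = cc ⟨x, hx⟩ ∧ v ∈ U ∧ G.Adj u.1 v := by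
    intro x w p
    induction p with
    | nil => intro hx h; exact absurd rfl (h hx)
    | @cons x z w hadj p ih =>
      intro hx h
      by_cases hz : z ∈ U
      · exact ⟨⟨x, hx⟩, z, rfl, hz, hadj⟩
      · have hzS : z ∈ S := hvS hz
        have hccz : cc ⟨z, hzS⟩ = cc ⟨x, hx⟩ := by
          have hadj' : G'.Adj ⟨z, hzS⟩ ⟨x, hx⟩ := by
            rw [hG']; exact hadj.symm
          exact SimpleGraph.ConnectedComponent.sound hadj'.reachable
        obtain ⟨u, v, h1, h2, h3⟩ := ih hzS (fun hw hcc => h hw (hcc.trans hccz))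
        exact ⟨u, v, h1.trans hccz, h2, h3⟩
  have he1 : ∀ C : K, (1:ℝ) ≤ (edgesToCut C : ℝ) := by
    intro C
    have ⟨u, hu⟩ := C.exists_rep
    have hKcard : 1 < Nat.card K := hcut
    have ⟨C', hC'⟩ : ∃ C' : K, C' ≠ cc u := by
      rw [Nat.card_eq_fintype_card] at hKcard
      exact Fintype.exists_ne_of_one_lt_card hKcard (cc u)
    have ⟨w, hw⟩ := C'.exists_rep
    have hp : G.Walk u.1 w.1 := (hconn.preconnected u.1 w.1).some
    obtain ⟨u', v, h1, h2, h3⟩ := hbd u.1 w.1 hp u.2 (by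
      intro hwS hcc
      exact hC' (by rw [← hw]; exact hcc))
    have hne : Nonempty {p : ↥S × V // p.1 ∈ C.supp ∧ p.2 ∈ U ∧ G.Adj p.1.1 p.2} := by
      refine ⟨⟨(u', v), ?_, h2, h3⟩⟩
      rw [SimpleGraph.ConnectedComponent.mem_supp_iff]
      exact h1.trans hu
    have : 0 < edgesToCut C := Nat.card_pos (α := {p : ↥S × V // p.1 ∈ C.supp ∧ p.2 ∈ U ∧ G.Adj p.1.1 p.2})
    exact_mod_cast this
  have hμ0 : (0:ℝ) ≤ μ := by
    have h := hquad (fun _ => 1)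
    have hc : (0:ℝ) < Fintype.card V := by
      have : (0:ℕ) < Fintype.card V := Fintype.card_pos_iff.mpr (hconn.nonempty)
      exact_mod_cast this
    simp only [sub_self, dotProduct, mul_one, Finset.sum_const, Finset.card_univ,
      nsmul_eq_mul, ne_eq, OfNat.ofNat_ne_zero, not_false_eq_true, zero_pow,
      ite_self, Finset.sum_const_zero, zero_div] at h
    nlinarith [h, hc]
  have hdpos : ∀ C : K, 0 < μ - (edgesToCut C : ℝ) / (compSize C : ℝ) := by
    intro C
    have hm0 : (0:ℝ) < (compSize C : ℝ) := lt_of_lt_of_le one_pos (hm1 C)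
    have he0 : (0:ℝ) < (edgesToCut C : ℝ) := lt_of_lt_of_le one_pos (he1 C)
    by_contra hle
    push_neg at hle
    have hμm : μ * (compSize C : ℝ) ≤ (edgesToCut C : ℝ) := by
      have : μ ≤ (edgesToCut C : ℝ) / (compSize C : ℝ) := by linarith
      exact (le_div_iff₀ hm0).mp this
    set Ec := (edgesToCut C : ℝ) with hEc
    set Mc := (compSize C : ℝ) with hMc
    set R := ∑ C' ∈ univ.erase C, (compSize C' : ℝ) with hR
    have hR0 : (0:ℝ) ≤ R := Finset.sum_nonneg fun C' _ => Nat.cast_nonneg _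
    set B := μ * ((U.card : ℝ) + R) with hB
    have hB0 : (0:ℝ) ≤ B := mul_nonneg hμ0 (add_nonneg (Nat.cast_nonneg _) hR0)
    set t := -(B + 1) / (2 * Ec) with ht
    have hkey := key (fun C' => if C' = C then t else 1)
    have hLeft : ∑ C' : K, (edgesToCut C' : ℝ) * ((if C' = C then t else 1) - 1)^2
        = Ec * (t - 1)^2 := by
      rw [Finset.sum_eq_single C]
      · rw [if_pos rfl]
      · intro C' _ hne; rw [if_neg hne]; ring
      · intro habs; exact absurd (Finset.mem_univ C) habs
    have hRight : ∑ C' : K, (compSize C' : ℝ) * (if C' = C then t else 1)^2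
        = Mc * t^2 + R := by
      rw [← Finset.add_sum_erase _ _ (Finset.mem_univ C), if_pos rfl, hR]
      congr 1
      refine Finset.sum_congr rfl fun C' hC' => ?_
      rw [if_neg (Finset.mem_erase.mp hC').1]
      ring
    rw [hLeft, hRight] at hkey
    have h2et : -(2 * Ec * t) = B + 1 := by
      rw [ht]; field_simp
    have hmt : μ * (Mc * t^2) ≤ Ec * t^2 := by
      nlinarith [sq_nonneg t]
    nlinarith [hkey, hmt, h2et, hB0, he0]
  -- conclusion
  obtain ⟨C₀⟩ : Nonempty K := by
    have h1 : 0 < numComponents G U := lt_trans one_pos hcut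
    have h2 : 0 < Nat.card K := h1
    exact (Nat.card_pos_iff.mp h2).1
  have hμpos : 0 < μ := by
    have h1 := hdpos C₀
    have h2 : 0 < (edgesToCut C₀:ℝ)/(compSize C₀:ℝ) :=
      div_pos (lt_of_lt_of_le one_pos (he1 C₀)) (lt_of_lt_of_le one_pos (hm1 C₀))
    linarith
  have hgen : ∀ (E M D : ℝ), M ≠ 0 → D ≠ 0 →
      E * (-(E)/(M*D) - 1)^2 - (D + E/M) * (M * (-(E)/(M*D))^2) = (D + E/M) * (E / D) := by
    intro E M D hM hD; field_simp; ring
  have hper : ∀ C : K, (edgesToCut C:ℝ)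
        * ((-(edgesToCut C:ℝ)/((compSize C:ℝ) * (μ - (edgesToCut C:ℝ)/(compSize C:ℝ)))) - 1)^2
      - μ * ((compSize C:ℝ)
        * ((-(edgesToCut C:ℝ)/((compSize C:ℝ) * (μ - (edgesToCut C:ℝ)/(compSize C:ℝ)))))^2)
      = μ * ((edgesToCut C:ℝ) / (μ - (edgesToCut C:ℝ)/(compSize C:ℝ))) := by
    intro C
    have hM : (compSize C:ℝ) ≠ 0 := ne_of_gt (lt_of_lt_of_le one_pos (hm1 C))
    have hD : μ - (edgesToCut C:ℝ)/(compSize C:ℝ) ≠ 0 := ne_of_gt (hdpos C)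
    have h := hgen (edgesToCut C:ℝ) (compSize C:ℝ) (μ - (edgesToCut C:ℝ)/(compSize C:ℝ)) hM hD
    rw [sub_add_cancel] at h
    exact h
  have hkey := key (fun C => -(edgesToCut C:ℝ)
    /((compSize C:ℝ) * (μ - (edgesToCut C:ℝ)/(compSize C:ℝ))))
  beta_reduce at hkey
  have hsum : ∑ C : K, μ * ((edgesToCut C:ℝ)/(μ - (edgesToCut C:ℝ)/(compSize C:ℝ)))
      ≤ μ * (U.card:ℝ) := by
    have h2 : ∑ C : K, μ * ((edgesToCut C:ℝ)/(μ - (edgesToCut C:ℝ)/(compSize C:ℝ)))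
        = (∑ C : K, (edgesToCut C:ℝ)
            * ((-(edgesToCut C:ℝ)/((compSize C:ℝ) * (μ - (edgesToCut C:ℝ)/(compSize C:ℝ)))) - 1)^2)
          - μ * ∑ C : K, (compSize C:ℝ)
            * ((-(edgesToCut C:ℝ)/((compSize C:ℝ) * (μ - (edgesToCut C:ℝ)/(compSize C:ℝ)))))^2 := by
      rw [Finset.mul_sum, ← Finset.sum_sub_distrib]
      exact Finset.sum_congr rfl fun C _ => (hper C).symm
    rw [h2]
    have h3 := hkey
    rw [mul_add] at h3
    linarith
  rw [← Finset.mul_sum] at hsum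
  have hfinal := le_of_mul_le_mul_left hsum hμpos
  rw [finsum_eq_sum_of_fintype]
  exact hfinal
end

section
/- Let Γ be a connected non-complete graph with minimum degree δ and Laplacian eigenvalues 0 = μ₁ < μ₂ ≤ ⋯ ≤ μₙ. Let U be a vertex cut with components H₁,…,H_c of Γ−U and e_i the number of edges from H_i to U. Then ∑_{i=1}^{c} e_i/|H_i| ≤ (μₙ − δ)|U|. -/
open Finset Matrix BigOperators

section Aux

lemma rayleigh_le {V : Type*} [Fintype V] [DecidableEq V] {A : Matrix V V ℝ}
    (hA : A.IsHermitian) {c : ℝ} (hc : ∀ i, hA.eigenvalues i ≤ c) (x : V → ℝ) :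
    x ⬝ᵥ (A *ᵥ x) ≤ c * (x ⬝ᵥ x) := by
  classical
  set Umat : Matrix V V ℝ := (hA.eigenvectorUnitary : Matrix V V ℝ) with hU
  set y : V → ℝ := star Umat *ᵥ x with hy
  have hUy : x ᵥ* Umat = y := by
    rw [hy, star_eq_conjTranspose, conjTranspose_eq_transpose_of_trivial, mulVec_transpose]
  have hdiag : ∀ z : V → ℝ, z ⬝ᵥ (diagonal (RCLike.ofReal ∘ hA.eigenvalues) *ᵥ z)
      = ∑ i, hA.eigenvalues i * (z i)^2 := by
    intro z
    simp [dotProduct, mulVec_diagonal]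
    congr 1; ext i; ring
  have h1 : x ⬝ᵥ (A *ᵥ x) = ∑ i, hA.eigenvalues i * (y i)^2 := by
    conv_lhs => rw [hA.spectral_theorem, Unitary.conjStarAlgAut_apply]
    rw [← mulVec_mulVec, ← mulVec_mulVec, dotProduct_mulVec, hUy, ← hy, hdiag]
  have h2 : x ⬝ᵥ x = ∑ i, (y i)^2 := by
    have : y ⬝ᵥ y = x ⬝ᵥ x := by
      nth_rewrite 1 [← hUy]
      rw [hy, dotProduct_mulVec, vecMul_vecMul,
        Matrix.mem_unitaryGroup_iff.mp hA.eigenvectorUnitary.2, vecMul_one]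
    rw [← this]
    simp [dotProduct, pow_two]
  rw [h1, h2, Finset.mul_sum]
  exact Finset.sum_le_sum fun i _ => mul_le_mul_of_nonneg_right (hc i) (sq_nonneg _)

lemma eigenvalues_le_eig_last {V : Type*} [Fintype V] [DecidableEq V] [Nonempty V]
    {A : Matrix V V ℝ} (hA : A.IsHermitian) (i : V) :
    hA.eigenvalues i ≤ eig hA (Fintype.card V - 1) := by
  have hn : 0 < Fintype.card V := Fintype.card_pos
  have hlt : Fintype.card V - 1 < Fintype.card V := Nat.sub_lt hn one_pos
  rw [eig, dif_pos hlt]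
  set f := hA.eigenvalues ∘ (Fintype.equivFin V).symm with hf
  set j := (Tuple.sort f).symm (Fintype.equivFin V i) with hj
  have h1 : sortedEigs hA j = hA.eigenvalues i := by
    show ((hA.eigenvalues ∘ (Fintype.equivFin V).symm) ∘ Tuple.sort f) j = _
    rw [← hf, Function.comp_apply, hj, Equiv.apply_symm_apply, hf, Function.comp_apply,
      Equiv.symm_apply_apply]
  rw [← h1]
  exact Tuple.monotone_sort f (by omega : j.1 ≤ Fintype.card V - 1)

lemma quad_form_eq {V : Type*} [Fintype V] [DecidableEq V] (G : SimpleGraph V)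
    [DecidableRel G.Adj] (x : V → ℝ) :
    x ⬝ᵥ (G.lapMatrix ℝ *ᵥ x) =
      (∑ i : V, ∑ j : V, if G.Adj i j then (x i - x j)^2 else 0) / 2 := by
  rw [← Matrix.toLinearMap₂'_apply', SimpleGraph.lapMatrix_toLinearMap₂']

lemma degree_add_one_le_mu {V : Type*} [Fintype V] [DecidableEq V] (G : SimpleGraph V)
    [DecidableRel G.Adj] {μ : ℝ}
    (hray : ∀ x : V → ℝ, x ⬝ᵥ (G.lapMatrix ℝ *ᵥ x) ≤ μ * (x ⬝ᵥ x))
    (v : V) (hd : 0 < G.degree v) :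
    (G.degree v : ℝ) + 1 ≤ μ := by
  classical
  set d : ℝ := (G.degree v : ℝ) with hdd
  have hd0 : (0:ℝ) < d := by rw [hdd]; exact_mod_cast hd
  set x : V → ℝ := fun u => if u = v then d else if G.Adj v u then -1 else 0 with hx
  have hxv : x v = d := by simp [hx]
  have hxadj : ∀ u, G.Adj v u → x u = -1 := by
    intro u hu
    have : u ≠ v := fun h => G.irrefl (h ▸ hu)
    simp [hx, this, hu]
  set F : V → V → ℝ := fun i j => if G.Adj i j then (x i - x j)^2 else 0 with hF
  have hFa : ∀ i j, F i j = if G.Adj i j then (x i - x j)^2 else 0 := fun _ _ => rfl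
  have hFnn : ∀ i j, 0 ≤ F i j := by
    intro i j; rw [hFa]; split <;> [exact sq_nonneg _; exact le_refl 0]
  have hsumdeg : (∑ j : V, if G.Adj v j then ((d:ℝ)+1)^2 else 0) = d * (d+1)^2 := by
    rw [← Finset.sum_filter, Finset.sum_const, ← SimpleGraph.neighborFinset_eq_filter,
      SimpleGraph.card_neighborFinset_eq_degree, nsmul_eq_mul, ← hdd]
  have hrow : ∑ j : V, F v j = d * (d+1)^2 := by
    rw [← hsumdeg]
    refine Finset.sum_congr rfl fun j _ => ?_
    by_cases h : G.Adj v j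
    · rw [hFa, if_pos h, if_pos h, hxv, hxadj j h]; ring
    · rw [hFa, if_neg h, if_neg h]
  have hcol : ∑ i : V, F i v = d * (d+1)^2 := by
    rw [← hsumdeg]
    refine Finset.sum_congr rfl fun i _ => ?_
    by_cases h : G.Adj v i
    · rw [hFa, if_pos h.symm, if_pos h, hxv, hxadj i h]; ring
    · rw [hFa, if_neg (fun hh => h hh.symm), if_neg h]
  have hQ : 2 * (d * (d+1)^2) ≤ ∑ i : V, ∑ j : V, F i j := by
    have h1 : ∑ i : V, ∑ j : V, F i j
        = (∑ j : V, F v j) + ∑ i ∈ Finset.univ.erase v, ∑ j : V, F i j :=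
      (Finset.add_sum_erase _ (fun i => ∑ j : V, F i j) (Finset.mem_univ v)).symm
    have h2 : ∑ i ∈ Finset.univ.erase v, F i v ≤ ∑ i ∈ Finset.univ.erase v, ∑ j : V, F i j :=
      Finset.sum_le_sum fun i _ => Finset.single_le_sum (fun j _ => hFnn i j) (Finset.mem_univ v)
    have h3 : ∑ i ∈ Finset.univ.erase v, F i v = ∑ i : V, F i v - F v v :=
      Finset.sum_erase_eq_sub (Finset.mem_univ v)
    have h4 : F v v = 0 := by rw [hFa, if_neg (G.irrefl)]
    rw [h1]
    nlinarith [h2, hrow, hcol, h3, h4]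
  have hxx : x ⬝ᵥ x = d * (d+1) := by
    rw [dotProduct, ← Finset.add_sum_erase _ (fun u => x u * x u) (Finset.mem_univ v)]
    have h5 : ∀ u ∈ Finset.univ.erase v, x u * x u = if G.Adj v u then 1 else 0 := by
      intro u hu
      have hne : u ≠ v := Finset.ne_of_mem_erase hu
      by_cases h2 : G.Adj v u <;> simp [hx, hne, h2]
    rw [Finset.sum_congr rfl h5, Finset.sum_erase _ (by simp [G.irrefl]),
      ← Finset.sum_filter, Finset.sum_const, ← SimpleGraph.neighborFinset_eq_filter,
      SimpleGraph.card_neighborFinset_eq_degree, nsmul_eq_mul, ← hdd, hxv]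
    ring
  have hmain := hray x
  rw [quad_form_eq, hxx] at hmain
  have hQ2 : ∑ i : V, ∑ j : V, F i j = ∑ i : V, ∑ j : V, if G.Adj i j then (x i - x j)^2 else 0 :=
    rfl
  rw [← hQ2] at hmain
  have hpos : 0 < d * (d+1) := by nlinarith
  nlinarith

lemma per_comp (μ d e h : ℝ) (hh : 1 ≤ h) (hd1 : 1 ≤ d) (hμd : d + 1 ≤ μ)
    (he0 : 0 ≤ e) (heub : e ≤ h*(μ-1)) (helb : h*(d - h + 1) ≤ e) :
    e/h ≤ (μ-d)/μ * (e*(1+e/(μ*h-e))^2 - μ*h*(e/(μ*h-e))^2) := by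
  have hA : 0 < μ*h - e := by nlinarith
  have hμ0 : (0:ℝ) < μ := by linarith
  have hmd : 1 ≤ μ - d := by linarith
  have hid : e*(1+e/(μ*h-e))^2 - μ*h*(e/(μ*h-e))^2 = μ*h*e/(μ*h-e) := by
    field_simp
    ring
  rw [hid]
  have hkey : e*(μ*h-e) ≤ e*((μ-d)*h^2) := by
    nlinarith [mul_le_mul_of_nonneg_left helb he0,
      mul_nonneg (mul_nonneg he0 (by linarith : (0:ℝ) ≤ h))
        (mul_nonneg (by linarith : (0:ℝ) ≤ h-1) (by linarith : (0:ℝ) ≤ μ-d-1))]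
  rw [div_mul_div_comm, div_le_div_iff₀ (by linarith : (0:ℝ) < h) (by positivity)]
  nlinarith [mul_le_mul_of_nonneg_left hkey (le_of_lt hμ0)]

end Aux

/-- Key upper bound: `∑_i e_i/|H_i| ≤ (μ_n - δ)|U|`. -/
theorem sum_avg_degree_bound {V : Type*} [Fintype V] [DecidableEq V]
    (G : SimpleGraph V) [DecidableRel G.Adj]
    (hconn : G.Connected) (hnc : G ≠ ⊤)
    (U : Finset V) (hcut : 1 < numComponents G U) :
    ∑ᶠ C : (G.induce ((↑U : Set V)ᶜ)).ConnectedComponent,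
        (edgesToCut C : ℝ) / (compSize C : ℝ)
      ≤ (eig (Matrix.PosSemidef.isHermitian (G.posSemidef_lapMatrix ℝ)) (Fintype.card V - 1)
          - (G.minDegree : ℝ)) * (U.card : ℝ) := by
  classical
  haveI : Nonempty V := hconn.nonempty
  set K := (G.induce ((↑U : Set V)ᶜ)).ConnectedComponent with hK
  haveI hKfin : Finite K := by unfold K; infer_instance
  haveI hKfint : Fintype K := Fintype.ofFinite K
  haveI hKnt : Nontrivial K := Finite.one_lt_card_iff_nontrivial.mp hcut
  set hL := Matrix.PosSemidef.isHermitian (G.posSemidef_lapMatrix ℝ) with hhL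
  set μ : ℝ := eig hL (Fintype.card V - 1) with hμdef
  set δ : ℝ := (G.minDegree : ℝ) with hδdef
  have hray : ∀ x : V → ℝ, x ⬝ᵥ (G.lapMatrix ℝ *ᵥ x) ≤ μ * (x ⬝ᵥ x) :=
    fun x => rayleigh_le hL (fun i => eigenvalues_le_eig_last hL i) x
  -- every vertex has positive degree
  have hVnt : Nontrivial V := by
    obtain ⟨C₁, C₂, hC⟩ := hKnt
    obtain ⟨w₁, hw₁⟩ := C₁.exists_rep
    obtain ⟨w₂, hw₂⟩ := C₂.exists_rep
    refine ⟨⟨w₁.1, w₂.1, fun h => hC ?_⟩⟩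
    rw [← hw₁, ← hw₂, Subtype.ext h]
  have hdeg : ∀ v : V, 0 < G.degree v := by
    intro v
    obtain ⟨u, hu⟩ := exists_ne v
    obtain ⟨p⟩ := hconn.preconnected v u
    rw [G.degree_pos_iff_exists_adj]
    cases p with
    | nil => exact absurd rfl hu
    | cons h _ => exact ⟨_, h⟩
  have hδ1 : 1 ≤ δ := by
    obtain ⟨v0, hv0⟩ := G.exists_minimal_degree_vertex
    rw [hδdef, hv0]
    exact_mod_cast hdeg v0
  have hμδ : δ + 1 ≤ μ := by
    obtain ⟨v0, hv0⟩ := G.exists_minimal_degree_vertex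
    rw [hδdef, hv0]
    exact degree_add_one_le_mu G hray v0 (hdeg v0)
  have hdegub : ∀ v : V, (G.degree v : ℝ) ≤ μ - 1 := fun v => by
    linarith [degree_add_one_le_mu G hray v (hdeg v)]
  -- the component of each vertex
  set comp : V → K := fun v =>
    if h : v ∈ ((↑U : Set V)ᶜ : Set V) then
      (G.induce ((↑U : Set V)ᶜ)).connectedComponentMk ⟨v, h⟩
    else Classical.arbitrary K with hcomp
  have hWiff : ∀ v : V, v ∈ ((↑U : Set V)ᶜ : Set V) ↔ v ∉ U := fun v => by simp
  have hcomp_eq : ∀ (v : V) (h : v ∈ ((↑U : Set V)ᶜ : Set V)),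
      comp v = (G.induce ((↑U : Set V)ᶜ)).connectedComponentMk ⟨v, h⟩ := by
    intro v h; rw [hcomp]; exact dif_pos h
  have hcomp_adj : ∀ v u : V, v ∉ U → u ∉ U → G.Adj v u → comp v = comp u := by
    intro v u hv hu hadj
    have hv' : v ∈ ((↑U : Set V)ᶜ : Set V) := (hWiff v).mpr hv
    have hu' : u ∈ ((↑U : Set V)ᶜ : Set V) := (hWiff u).mpr hu
    rw [hcomp_eq v hv', hcomp_eq u hu']
    exact SimpleGraph.ConnectedComponent.sound
      ((SimpleGraph.comap_adj.mpr hadj : (G.induce ((↑U : Set V)ᶜ)).Adj ⟨v, hv'⟩ ⟨u, hu'⟩).reachable)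
  set suppF : K → Finset V := fun C => Uᶜ.filter (fun v => comp v = C) with hsuppF
  set eU : V → ℕ := fun v => (U.filter (G.Adj v)).card with heU
  have hmem_suppF : ∀ (C : K) (v : V), v ∈ suppF C ↔ v ∉ U ∧ comp v = C := by
    intro C v; rw [hsuppF]; simp [Finset.mem_filter]
  -- compSize
  have hsupp_card : ∀ C : K, compSize C = (suppF C).card := by
    intro C
    have hmemW : ∀ v ∈ suppF C, v ∈ ((↑U : Set V)ᶜ : Set V) :=
      fun v hv => (hWiff v).mpr ((hmem_suppF C v).mp hv).1
    have hmk : ∀ (v : V) (hv : v ∈ suppF C),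
        (⟨v, hmemW v hv⟩ : ((↑U : Set V)ᶜ : Set V)) ∈ C.supp := by
      intro v hv
      rw [SimpleGraph.ConnectedComponent.mem_supp_iff, ← hcomp_eq v (hmemW v hv)]
      exact ((hmem_suppF C v).mp hv).2
    let f : {v : V // v ∈ suppF C} → C.supp := fun v => ⟨⟨v.1, hmemW v.1 v.2⟩, hmk v.1 v.2⟩
    have hbij : Function.Bijective f := by
      constructor
      · intro a b hab
        exact Subtype.ext (congrArg (fun z : C.supp => z.1.1) hab)
      · intro b
        have hb1 : b.1.1 ∈ suppF C := by
          refine (hmem_suppF C b.1.1).mpr ⟨(hWiff b.1.1).mp b.1.2, ?_⟩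
          rw [hcomp_eq b.1.1 b.1.2]
          exact (SimpleGraph.ConnectedComponent.mem_supp_iff C b.1).mp b.2
        refine ⟨⟨b.1.1, hb1⟩, ?_⟩
        apply Subtype.ext; apply Subtype.ext; rfl
    calc compSize C = Nat.card C.supp := rfl
      _ = Nat.card {v : V // v ∈ suppF C} := (Nat.card_eq_of_bijective f hbij).symm
      _ = (suppF C).card := Nat.card_eq_finsetCard _
  -- edgesToCut
  have hedges : ∀ C : K, edgesToCut C = ∑ v ∈ suppF C, eU v := by
    intro C
    set P : V × V → Prop := fun p => p.1 ∈ suppF C ∧ p.2 ∈ U ∧ G.Adj p.1 p.2 with hP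
    have hPa : ∀ p, P p ↔ p.1 ∈ suppF C ∧ p.2 ∈ U ∧ G.Adj p.1 p.2 := fun _ => Iff.rfl
    let f : {p : ((↑U : Set V)ᶜ : Set V) × V // p.1 ∈ C.supp ∧ p.2 ∈ U ∧ G.Adj p.1.1 p.2}
        → {p : V × V // P p} := fun q =>
      ⟨(q.1.1.1, q.1.2), ⟨by
        refine (hmem_suppF C q.1.1.1).mpr ⟨(hWiff q.1.1.1).mp q.1.1.2, ?_⟩
        rw [hcomp_eq q.1.1.1 q.1.1.2]
        exact (SimpleGraph.ConnectedComponent.mem_supp_iff C q.1.1).mp q.2.1,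
        q.2.2.1, q.2.2.2⟩⟩
    have hbij : Function.Bijective f := by
      constructor
      · intro a b hab
        have h1 : a.1.1.1 = b.1.1.1 := congrArg (fun z : {p : V × V // P p} => z.1.1) hab
        have h2 : a.1.2 = b.1.2 := congrArg (fun z : {p : V × V // P p} => z.1.2) hab
        apply Subtype.ext
        exact Prod.ext (Subtype.ext h1) h2
      · rintro ⟨⟨v, u⟩, hp⟩
        obtain ⟨h1, h2, h3⟩ := (hPa (v, u)).mp hp
        have hw : v ∈ ((↑U : Set V)ᶜ : Set V) := (hWiff v).mpr ((hmem_suppF C v).mp h1).1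
        have hs : (⟨v, hw⟩ : ((↑U : Set V)ᶜ : Set V)) ∈ C.supp := by
          rw [SimpleGraph.ConnectedComponent.mem_supp_iff, ← hcomp_eq v hw]
          exact ((hmem_suppF C v).mp h1).2
        exact ⟨⟨(⟨v, hw⟩, u), ⟨hs, h2, h3⟩⟩, rfl⟩
    have hcount : Nat.card {p : V × V // P p} = ∑ v ∈ suppF C, eU v := by
      rw [Nat.card_eq_fintype_card, Fintype.card_subtype, Finset.card_filter,
        Fintype.sum_prod_type]
      have hrow : ∀ v : V, (∑ u : V, if P (v, u) then 1 else 0)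
          = if v ∈ suppF C then eU v else 0 := by
        intro v
        by_cases hv : v ∈ suppF C
        · rw [if_pos hv]
          have : ∀ u : V, (if P (v, u) then 1 else 0)
              = if u ∈ U then (if G.Adj v u then 1 else 0) else 0 := by
            intro u
            by_cases h1 : u ∈ U <;> by_cases h2 : G.Adj v u <;> simp [hPa, hv, h1, h2]
          simp_rw [this]
          rw [Finset.sum_ite_mem, Finset.univ_inter, ← Finset.card_filter]
        · rw [if_neg hv]
          apply Finset.sum_eq_zero
          intro u _
          rw [if_neg (fun hh => hv ((hPa (v, u)).mp hh).1)]
      simp_rw [hrow]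
      rw [Finset.sum_ite_mem, Finset.univ_inter]
    rw [← hcount]
    exact Nat.card_eq_of_bijective f hbij
  have hsupp_pos : ∀ C : K, 0 < (suppF C).card := by
    intro C
    obtain ⟨b, hb⟩ := C.exists_rep
    refine Finset.card_pos.mpr ⟨b.1, (hmem_suppF C b.1).mpr ⟨?_, ?_⟩⟩
    · exact (hWiff b.1).mp b.2
    · rw [hcomp_eq b.1 b.2, ← hb]
      congr
  -- degree bound
  have hdlb : ∀ (C : K), ∀ v ∈ suppF C, G.degree v ≤ eU v + ((suppF C).card - 1) := by
    intro C v hv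
    obtain ⟨hvU, hvC⟩ := (hmem_suppF C v).mp hv
    have hsplit := Finset.card_filter_add_card_filter_not
      (s := G.neighborFinset v) (p := (· ∈ U))
    have h1 : (G.neighborFinset v).filter (· ∈ U) = U.filter (G.Adj v) := by
      ext u
      simp only [Finset.mem_filter, SimpleGraph.mem_neighborFinset]
      tauto
    have h2 : (G.neighborFinset v).filter (fun u => ¬ u ∈ U) ⊆ (suppF C).erase v := by
      intro u hu
      rw [Finset.mem_filter, SimpleGraph.mem_neighborFinset] at hu
      rw [Finset.mem_erase]
      exact ⟨hu.1.ne', (hmem_suppF C u).mpr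
        ⟨hu.2, by rw [← hcomp_adj v u hvU hu.2 hu.1, hvC]⟩⟩
    have h3 := Finset.card_le_card h2
    rw [Finset.card_erase_of_mem hv] at h3
    rw [h1] at hsplit
    rw [G.card_neighborFinset_eq_degree] at hsplit
    have heUv : eU v = (U.filter (G.Adj v)).card := rfl
    omega
  -- real abbreviations
  set e : K → ℝ := fun C => ((edgesToCut C : ℕ) : ℝ) with he
  set h : K → ℝ := fun C => ((compSize C : ℕ) : ℝ) with hh
  have hh1 : ∀ C, 1 ≤ h C := by
    intro C; rw [hh]; simp only [hsupp_card]
    exact_mod_cast hsupp_pos C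
  have he0 : ∀ C, 0 ≤ e C := fun C => Nat.cast_nonneg _
  have heub : ∀ C, e C ≤ h C * (μ - 1) := by
    intro C
    have hev : ∀ v : V, (eU v : ℝ) ≤ μ - 1 := by
      intro v
      have h1 : eU v ≤ G.degree v := by
        apply Finset.card_le_card
        intro u hu
        rw [Finset.mem_filter] at hu
        rw [SimpleGraph.mem_neighborFinset]
        exact hu.2
      calc (eU v : ℝ) ≤ (G.degree v : ℝ) := by exact_mod_cast h1
        _ ≤ μ - 1 := hdegub v
    have : e C = ∑ v ∈ suppF C, (eU v : ℝ) := by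
      rw [he]
      simp only [hedges C]
      push_cast
      rfl
    rw [this, hh]
    simp only [hsupp_card C]
    calc ∑ v ∈ suppF C, (eU v : ℝ) ≤ ∑ v ∈ suppF C, (μ - 1) :=
        Finset.sum_le_sum fun v _ => hev v
      _ = ((suppF C).card : ℝ) * (μ - 1) := by rw [Finset.sum_const, nsmul_eq_mul]
  have helb : ∀ C, h C * (δ - h C + 1) ≤ e C := by
    intro C
    have hcard1 : 1 ≤ (suppF C).card := hsupp_pos C
    have hev : ∀ v ∈ suppF C, δ - h C + 1 ≤ (eU v : ℝ) := by
      intro v hv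
      have h1 := hdlb C v hv
      have h2 : (G.degree v : ℝ) ≤ (eU v : ℝ) + (((suppF C).card : ℝ) - 1) := by
        have := (Nat.cast_le (α := ℝ)).mpr h1
        push_cast [Nat.cast_sub hcard1] at this
        linarith
      have h3 : δ ≤ (G.degree v : ℝ) := by
        rw [hδdef]
        exact_mod_cast G.minDegree_le_degree v
      have h4 : h C = ((suppF C).card : ℝ) := by rw [hh]; simp only [hsupp_card C]
      rw [h4]
      linarith
    have hsum : ∑ v ∈ suppF C, (δ - h C + 1) ≤ ∑ v ∈ suppF C, (eU v : ℝ) :=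
      Finset.sum_le_sum hev
    rw [Finset.sum_const, nsmul_eq_mul] at hsum
    have h5 : e C = ∑ v ∈ suppF C, (eU v : ℝ) := by
      rw [he]
      simp only [hedges C]
      push_cast
      rfl
    have h4 : h C = ((suppF C).card : ℝ) := by rw [hh]; simp only [hsupp_card C]
    rw [h5, h4]
    rw [h4] at hsum
    exact hsum
  -- key Rayleigh inequality
  have hfiber : ∀ (F : V → ℝ), ∑ v ∈ Uᶜ, F v = ∑ C : K, ∑ v ∈ suppF C, F v := by
    intro F
    rw [← Finset.sum_fiberwise_of_maps_to (g := comp) (t := Finset.univ)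
      (fun i _ => Finset.mem_univ (comp i)) F]
  have hsupp_eq : ∀ C : K, Uᶜ.filter (fun v => comp v = C) = suppF C := fun _ => rfl
  have hecast : ∀ C : K, e C = ∑ v ∈ suppF C, (eU v : ℝ) := by
    intro C
    rw [he]
    simp only [hedges C]
    push_cast
    rfl
  have hhcast : ∀ C : K, h C = ((suppF C).card : ℝ) := by
    intro C; rw [hh]; simp only [hsupp_card C]
  have key : ∀ t : K → ℝ,
      ∑ C : K, e C * (1 + t C)^2 ≤ μ * ((U.card : ℝ) + ∑ C : K, h C * (t C)^2) := by
    intro t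
    set x : V → ℝ := fun v => if v ∈ U then 1 else -t (comp v) with hx
    have hmain := hray x
    rw [quad_form_eq] at hmain
    set g : V → V → ℝ :=
      fun i j => if i ∉ U ∧ j ∈ U ∧ G.Adj i j then (1 + t (comp i))^2 else 0 with hg
    have hga : ∀ i j, g i j = if i ∉ U ∧ j ∈ U ∧ G.Adj i j then (1 + t (comp i))^2 else 0 :=
      fun _ _ => rfl
    have hsplitF : ∀ i j : V,
        (if G.Adj i j then (x i - x j)^2 else 0) = g i j + g j i := by
      intro i j
      by_cases hadj : G.Adj i j
      · by_cases hi : i ∈ U <;> by_cases hj : j ∈ U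
        · rw [if_pos hadj, hga, hga, if_neg (by tauto), if_neg (by tauto)]
          simp [hx, hi, hj]
        · rw [if_pos hadj, hga, hga, if_neg (by tauto),
            if_pos ⟨hj, hi, hadj.symm⟩]
          simp only [hx, if_pos hi, if_neg hj]
          ring
        · rw [if_pos hadj, hga, hga, if_pos ⟨hi, hj, hadj⟩, if_neg (by tauto)]
          simp only [hx, if_neg hi, if_pos hj]
          ring
        · have hc := hcomp_adj i j hi hj hadj
          rw [if_pos hadj, hga, hga, if_neg (by tauto), if_neg (by tauto)]
          simp [hx, hi, hj, hc]
      · rw [if_neg hadj, hga, hga, if_neg (fun hh => hadj hh.2.2),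
          if_neg (fun hh => hadj hh.2.2.symm)]
        norm_num
    have hgsum : ∑ i : V, ∑ j : V, g i j = ∑ C : K, e C * (1 + t C)^2 := by
      have hrow : ∀ i : V, ∑ j : V, g i j
          = if i ∈ Uᶜ then (1 + t (comp i))^2 * (eU i : ℝ) else 0 := by
        intro i
        by_cases hi : i ∈ U
        · rw [if_neg (by simp [hi])]
          apply Finset.sum_eq_zero
          intro j _
          rw [hga, if_neg (by tauto)]
        · rw [if_pos (by simp [hi])]
          have hterm : ∀ j : V, g i j
              = if j ∈ U then (if G.Adj i j then (1 + t (comp i))^2 else 0) else 0 := by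
            intro j
            by_cases h1 : j ∈ U <;> by_cases h2 : G.Adj i j <;> simp [hga, hi, h1, h2]
          simp_rw [hterm]
          rw [Finset.sum_ite_mem, Finset.univ_inter, ← Finset.sum_filter,
            Finset.sum_const, nsmul_eq_mul, mul_comm]
      rw [Finset.sum_congr rfl (fun i _ => hrow i), Finset.sum_ite_mem, Finset.univ_inter,
        hfiber]
      apply Finset.sum_congr rfl
      intro C _
      have hstep : ∑ i ∈ suppF C, (1 + t (comp i))^2 * (eU i : ℝ)
          = ∑ i ∈ suppF C, (1 + t C)^2 * (eU i : ℝ) := by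
        refine Finset.sum_congr rfl fun i hi => ?_
        rw [((hmem_suppF C i).mp hi).2]
      rw [hstep, ← Finset.mul_sum, ← hecast C]
      ring
    have hxx : x ⬝ᵥ x = (U.card : ℝ) + ∑ C : K, h C * (t C)^2 := by
      have hxsq : ∀ v : V, x v * x v
          = (if v ∈ U then 1 else 0) + (if v ∈ Uᶜ then (t (comp v))^2 else 0) := by
        intro v
        by_cases hv : v ∈ U <;> simp [hx, hv] <;> ring
      rw [dotProduct, Finset.sum_congr rfl (fun v _ => hxsq v),
        Finset.sum_add_distrib, Finset.sum_ite_mem, Finset.univ_inter,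
        Finset.sum_ite_mem, Finset.univ_inter, Finset.sum_const, hfiber]
      congr 1
      · simp
      · apply Finset.sum_congr rfl
        intro C _
        have hstep : ∑ i ∈ suppF C, (t (comp i))^2 = ∑ i ∈ suppF C, (t C)^2 := by
          refine Finset.sum_congr rfl fun i hi => ?_
          rw [((hmem_suppF C i).mp hi).2]
        rw [hstep, Finset.sum_const, nsmul_eq_mul, ← hhcast C]
    have hQg : ∑ i : V, ∑ j : V, (if G.Adj i j then (x i - x j)^2 else 0)
        = 2 * ∑ i : V, ∑ j : V, g i j := by
      rw [Finset.sum_congr rfl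
        (fun i _ => Finset.sum_congr rfl (fun j _ => hsplitF i j))]
      simp_rw [Finset.sum_add_distrib]
      rw [Finset.sum_comm (f := fun i j => g j i)]
      ring
    rw [hQg, hgsum, hxx] at hmain
    linarith
  -- final assembly
  rw [finsum_eq_sum_of_fintype]
  have hμ0 : (0:ℝ) < μ := by linarith
  set t : K → ℝ := fun C => e C / (μ * h C - e C) with ht
  have hper : ∀ C : K, e C / h C ≤ (μ - δ)/μ * (e C * (1 + t C)^2 - μ * h C * (t C)^2) :=
    fun C => per_comp μ δ (e C) (h C) (hh1 C) hδ1 hμδ (he0 C) (heub C) (helb C)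
  have hsum : ∑ C : K, (e C / h C) ≤ (μ - δ)/μ * (μ * (U.card : ℝ)) := by
    calc ∑ C : K, (e C / h C)
        ≤ ∑ C : K, (μ - δ)/μ * (e C * (1 + t C)^2 - μ * h C * (t C)^2) :=
          Finset.sum_le_sum fun C _ => hper C
      _ = (μ - δ)/μ * ∑ C : K, (e C * (1 + t C)^2 - μ * h C * (t C)^2) := by
          rw [Finset.mul_sum]
      _ ≤ (μ - δ)/μ * (μ * (U.card : ℝ)) := by
          refine mul_le_mul_of_nonneg_left ?_ (div_nonneg (by linarith) (le_of_lt hμ0))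
          rw [Finset.sum_sub_distrib]
          have := key t
          rw [mul_add] at this
          have h2 : ∑ C : K, μ * h C * (t C)^2 = μ * ∑ C : K, h C * (t C)^2 := by
            rw [Finset.mul_sum]; congr 1; ext C; ring
          linarith [this, h2.ge, h2.le]
  have hfin : (μ - δ)/μ * (μ * (U.card : ℝ)) = (μ - δ) * (U.card : ℝ) := by
    field_simp
  rw [hfin] at hsum
  exact le_trans (le_of_eq (Finset.sum_congr rfl fun C _ => rfl)) hsum
end

section
/- Let Γ be a connected non-complete graph with Laplacian eigenvalues 0 = μ₁ < μ₂ ≤ ⋯ ≤ μₙ. Let U be a vertex cut with components H₁,…,H_c of Γ−U and e_i the number of edges from H_i to U. Then for any distinct indices i, j ∈ {1,…,c}, (e_i/|H_i| − μ₂)|H_j| + (e_j/|H_j| − μ₂)|H_i| ≥ 0. In particular, at most one index i satisfies e_i/|H_i| < μ₂. -/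
open Finset Matrix BigOperators

section Ray
variable {V : Type*} [Fintype V] [DecidableEq V]

-- every eigenvalue value f m is some sortedEigs p
lemma exists_sorted {A : Matrix V V ℝ} (hA : A.IsHermitian) (k : V) :
    ∃ p : Fin (Fintype.card V), hA.eigenvalues k = sortedEigs hA p := by
  refine ⟨(Tuple.sort (hA.eigenvalues ∘ (Fintype.equivFin V).symm))⁻¹
    (Fintype.equivFin V k), ?_⟩
  simp [sortedEigs]

lemma eigzero {G : SimpleGraph V} [DecidableRel G.Adj] (hconn : G.Connected)
    (k : V) (hk : (G.posSemidef_lapMatrix ℝ).isHermitian.eigenvalues k = 0) :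
    ∀ i j : V, (G.posSemidef_lapMatrix ℝ).isHermitian.eigenvectorBasis k i
      = (G.posSemidef_lapMatrix ℝ).isHermitian.eigenvectorBasis k j := by
  set hA := (G.posSemidef_lapMatrix ℝ).isHermitian
  have h0 : G.lapMatrix ℝ *ᵥ ⇑(hA.eigenvectorBasis k) = 0 := by
    rw [hA.mulVec_eigenvectorBasis, hk]; simp
  have := (G.lapMatrix_mulVec_eq_zero_iff_forall_reachable
      (x := ⇑(hA.eigenvectorBasis k))).mp h0
  exact fun i j => this i j (hconn.preconnected i j)

lemma sorted0 {G : SimpleGraph V} [DecidableRel G.Adj] [Nonempty V]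
    (h0 : 0 < Fintype.card V) :
    sortedEigs (G.posSemidef_lapMatrix ℝ).isHermitian ⟨0, h0⟩ = 0 := by
  set hA := (G.posSemidef_lapMatrix ℝ).isHermitian with hhA
  -- some eigenvalue is 0
  have hker : ∃ k : V, hA.eigenvalues k = 0 := by
    by_contra hcon
    push_neg at hcon
    -- the constant vector 1 is in the kernel
    have h1 : G.lapMatrix ℝ *ᵥ (fun _ => (1:ℝ)) = 0 := G.lapMatrix_mulVec_const_eq_zero
    -- but then A is invertible? Use spectral theorem: A *ᵥ x = 0 → x = 0
    have hdet : IsUnit (G.lapMatrix ℝ).det := by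
      rw [hA.det_eq_prod_eigenvalues]
      simp only [isUnit_iff_ne_zero]
      exact Finset.prod_ne_zero_iff.mpr (fun k _ => by exact_mod_cast hcon k)
    have := (Matrix.mulVec_injective_iff_isUnit (A := G.lapMatrix ℝ)).mpr ((Matrix.isUnit_iff_isUnit_det _).mpr hdet)
    have h2 : (fun _ => (1:ℝ)) = (0 : V → ℝ) := by
      apply this
      rw [h1, Matrix.mulVec_zero]
    exact one_ne_zero (congrFun h2 (Classical.arbitrary V))
  obtain ⟨k, hk⟩ := hker
  obtain ⟨p, hp⟩ := exists_sorted hA k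
  have hmono := Tuple.monotone_sort (hA.eigenvalues ∘ (Fintype.equivFin V).symm)
  have hle : sortedEigs hA ⟨0, h0⟩ ≤ sortedEigs hA p := hmono (by simp [Fin.le_def])
  have hge : (0:ℝ) ≤ sortedEigs hA ⟨0, h0⟩ := by
    have := (G.posSemidef_lapMatrix ℝ).eigenvalues_nonneg
      ((Fintype.equivFin V).symm (Tuple.sort (hA.eigenvalues ∘ (Fintype.equivFin V).symm) ⟨0, h0⟩))
    simpa [sortedEigs] using this
  rw [← hp, hk] at hle
  linarith

lemma eig1_le {G : SimpleGraph V} [DecidableRel G.Adj] [Nonempty V]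
    (hV : 1 < Fintype.card V) (k : V)
    (hk : (G.posSemidef_lapMatrix ℝ).isHermitian.eigenvalues k ≠ 0) :
    eig (G.posSemidef_lapMatrix ℝ).isHermitian 1
      ≤ (G.posSemidef_lapMatrix ℝ).isHermitian.eigenvalues k := by
  set hA := (G.posSemidef_lapMatrix ℝ).isHermitian with hhA
  obtain ⟨p, hp⟩ := exists_sorted hA k
  have hmono := Tuple.monotone_sort (hA.eigenvalues ∘ (Fintype.equivFin V).symm)
  have hp0 : p ≠ ⟨0, by omega⟩ := by
    rintro rfl
    exact hk (hp.trans (sorted0 (by omega)))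
  have h1p : (⟨1, hV⟩ : Fin (Fintype.card V)) ≤ p := by
    simp only [Fin.le_def, Fin.val_mk]
    rcases Nat.eq_zero_or_pos p.1 with h | h
    · exact absurd (Fin.ext h) hp0
    · omega
  rw [eig, dif_pos hV, hp]
  exact hmono h1p

lemma rayleigh {G : SimpleGraph V} [DecidableRel G.Adj] [Nonempty V]
    (hconn : G.Connected) (hV : 1 < Fintype.card V) (x : V → ℝ)
    (hx : ∑ v, x v = 0) :
    eig (G.posSemidef_lapMatrix ℝ).isHermitian 1 * (x ⬝ᵥ x)
      ≤ x ⬝ᵥ (G.lapMatrix ℝ *ᵥ x) := by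
  set hA := (G.posSemidef_lapMatrix ℝ).isHermitian with hhA
  set W : Matrix V V ℝ := (hA.eigenvectorUnitary : Matrix V V ℝ) with hW
  have hWT : star W = Wᵀ := by
    rw [Matrix.star_eq_conjTranspose, Matrix.conjTranspose_eq_transpose_of_trivial]
  have hWW : W * Wᵀ = 1 := by
    rw [← hWT]
    exact (Matrix.mem_unitaryGroup_iff).mp (hA.eigenvectorUnitary).2
  set y : V → ℝ := x ᵥ* W with hy
  have hyW : Wᵀ *ᵥ x = y := Matrix.mulVec_transpose W x
  -- norm identity
  have hnorm : x ⬝ᵥ x = y ⬝ᵥ y := by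
    conv_lhs => rw [show x ⬝ᵥ x = x ⬝ᵥ ((1 : Matrix V V ℝ) *ᵥ x) by rw [Matrix.one_mulVec],
      ← hWW, ← Matrix.mulVec_mulVec, Matrix.dotProduct_mulVec, hyW]
  -- quadratic form identity
  have hquad : x ⬝ᵥ (G.lapMatrix ℝ *ᵥ x) = ∑ k, hA.eigenvalues k * y k ^ 2 := by
    conv_lhs => rw [hA.spectral_theorem]
    rw [Unitary.conjStarAlgAut_apply]
    rw [hWT, ← Matrix.mulVec_mulVec, ← Matrix.mulVec_mulVec, Matrix.dotProduct_mulVec, hyW]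
    simp only [dotProduct, Matrix.mulVec_diagonal, Function.comp_apply,
      RCLike.ofReal_real_eq_id, id_eq]
    exact Finset.sum_congr rfl (fun k _ => by ring)
  -- kernel components vanish
  have hker : ∀ k, hA.eigenvalues k = 0 → y k = 0 := by
    intro k hk
    have hconst := eigzero hconn k hk
    have hcol : ∀ i, W i k = hA.eigenvectorBasis k i := fun i =>
      Matrix.IsHermitian.eigenvectorUnitary_apply hA i k
    obtain ⟨v₀⟩ := ‹Nonempty V›
    have : y k = ∑ i, x i * hA.eigenvectorBasis k v₀ := by
      rw [hy]
      exact Finset.sum_congr rfl (fun i _ => by show x i * W i k = _; rw [hcol i, hconst i v₀])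
    rw [this, ← Finset.sum_mul, hx, zero_mul]
  rw [hnorm, hquad, dotProduct, Finset.mul_sum]
  refine Finset.sum_le_sum (fun k _ => ?_)
  rcases eq_or_ne (hA.eigenvalues k) 0 with h0 | h0
  · rw [h0, hker k h0]; simp
  · have := eig1_le (G := G) hV k h0
    have hsq : (0:ℝ) ≤ y k * y k := mul_self_nonneg _
    nlinarith [mul_self_nonneg (y k)]

end Ray

section Comb
variable {V : Type*} [Fintype V] [DecidableEq V] {G : SimpleGraph V} [DecidableRel G.Adj] {U : Finset V}

/-- `v` lies in the component `C` of `Γ - U`. -/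
def inComp (G : SimpleGraph V) (U : Finset V)
    (C : (G.induce ((↑U : Set V)ᶜ)).ConnectedComponent) (v : V) : Prop :=
  ∃ h : v ∈ ((↑U : Set V)ᶜ : Set V),
    (G.induce ((↑U : Set V)ᶜ)).connectedComponentMk ⟨v, h⟩ = C

lemma inComp.not_mem_U {C} {v : V} (h : inComp G U C v) : v ∉ U := by
  obtain ⟨h, -⟩ := h
  simpa using h

lemma inComp.eq_of_both {C D} {v : V} (hC : inComp G U C v) (hD : inComp G U D v) : C = D := by
  obtain ⟨h1, e1⟩ := hC; obtain ⟨h2, e2⟩ := hD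
  rw [← e1, ← e2]

lemma inComp_iff_of_adj {C} {i j : V} (hi : i ∉ U) (hj : j ∉ U) (ha : G.Adj i j) :
    inComp G U C i ↔ inComp G U C j := by
  have hi' : i ∈ ((↑U : Set V)ᶜ : Set V) := by simpa using hi
  have hj' : j ∈ ((↑U : Set V)ᶜ : Set V) := by simpa using hj
  have hadj : (G.induce ((↑U : Set V)ᶜ)).Adj ⟨i, hi'⟩ ⟨j, hj'⟩ := by
    simpa using ha
  have hmk : (G.induce ((↑U : Set V)ᶜ)).connectedComponentMk ⟨i, hi'⟩ =
      (G.induce ((↑U : Set V)ᶜ)).connectedComponentMk ⟨j, hj'⟩ :=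
    SimpleGraph.ConnectedComponent.sound hadj.reachable
  constructor
  · rintro ⟨h, e⟩
    exact ⟨hj', by rw [← hmk, ← e]⟩
  · rintro ⟨h, e⟩
    exact ⟨hi', by rw [hmk, ← e]⟩

lemma compSize_eq (C) [DecidablePred (inComp G U C)] :
    ((compSize C : ℕ) : ℝ) = ∑ v : V, if inComp G U C v then (1:ℝ) else 0 := by
  have hb : Function.Bijective (fun w : C.supp => (⟨(w : ((↑U : Set V)ᶜ : Set V)).1,
      ⟨(w : ((↑U : Set V)ᶜ : Set V)).2, w.2⟩⟩ : {v : V // inComp G U C v})) := by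
    constructor
    · rintro ⟨⟨v, hv⟩, hm⟩ ⟨⟨v', hv'⟩, hm'⟩ h
      simpa using congrArg Subtype.val h
    · rintro ⟨v, hK, hm⟩
      exact ⟨⟨⟨v, hK⟩, hm⟩, rfl⟩
  rw [compSize, Nat.card_eq_of_bijective _ hb, Nat.card_eq_fintype_card,
    Fintype.card_subtype, Finset.sum_boole]

lemma edgesToCut_eq (C) [DecidablePred (inComp G U C)] :
    ((edgesToCut C : ℕ) : ℝ) =
      ∑ i : V, ∑ j : V, if inComp G U C i ∧ j ∈ U ∧ G.Adj i j then (1:ℝ) else 0 := by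
  classical
  have hb : Function.Bijective (fun p : {p : ((↑U : Set V)ᶜ : Set V) × V //
      p.1 ∈ C.supp ∧ p.2 ∈ U ∧ G.Adj p.1.1 p.2} =>
      (⟨(p.1.1.1, p.1.2), ⟨⟨p.1.1.2, p.2.1⟩, p.2.2.1, p.2.2.2⟩⟩ :
        {q : V × V // inComp G U C q.1 ∧ q.2 ∈ U ∧ G.Adj q.1 q.2})) := by
    constructor
    · rintro ⟨⟨⟨v, hv⟩, u⟩, hm⟩ ⟨⟨⟨v', hv'⟩, u'⟩, hm'⟩ h
      have := congrArg Subtype.val h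
      simp only [Prod.mk.injEq] at this
      apply Subtype.ext
      simp [Prod.ext_iff, Subtype.ext_iff, this.1, this.2]
    · rintro ⟨⟨v, u⟩, ⟨hK, hm⟩, hu, ha⟩
      exact ⟨⟨(⟨v, hK⟩, u), hm, hu, ha⟩, rfl⟩
  rw [edgesToCut, Nat.card_eq_of_bijective _ hb, Nat.card_eq_fintype_card,
    Fintype.card_subtype]
  rw [Finset.card_filter]
  push_cast
  rw [Fintype.sum_prod_type]

lemma compSize_pos (C : (G.induce ((↑U : Set V)ᶜ)).ConnectedComponent) : 0 < compSize C := by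
  obtain ⟨w, hw⟩ := C.exists_rep
  have : Nonempty C.supp := ⟨⟨w, hw⟩⟩
  exact Nat.card_pos

end Comb

/-- Pairwise inequality `(e_i/|H_i| - μ₂)|H_j| + (e_j/|H_j| - μ₂)|H_i| ≥ 0`, and consequently
at most one component satisfies `e_i/|H_i| < μ₂`. -/
theorem pairwise_component_bound {V : Type*} [Fintype V] [DecidableEq V]
    (G : SimpleGraph V) [DecidableRel G.Adj]
    (hconn : G.Connected) (hnc : G ≠ ⊤)
    (U : Finset V) (hcut : 1 < numComponents G U) :
    (∀ C D : (G.induce ((↑U : Set V)ᶜ)).ConnectedComponent, C ≠ D →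
      ((edgesToCut C : ℝ) / (compSize C : ℝ)
          - eig (Matrix.PosSemidef.isHermitian (G.posSemidef_lapMatrix ℝ)) 1) * (compSize D : ℝ)
        + ((edgesToCut D : ℝ) / (compSize D : ℝ)
          - eig (Matrix.PosSemidef.isHermitian (G.posSemidef_lapMatrix ℝ)) 1) * (compSize C : ℝ)
        ≥ 0) ∧
    {C : (G.induce ((↑U : Set V)ᶜ)).ConnectedComponent |
        (edgesToCut C : ℝ) / (compSize C : ℝ) <
          eig (Matrix.PosSemidef.isHermitian (G.posSemidef_lapMatrix ℝ)) 1}.Subsingleton := by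
  classical
  set μ := eig (Matrix.PosSemidef.isHermitian (G.posSemidef_lapMatrix ℝ)) 1 with hμ
  have key : ∀ C D : (G.induce ((↑U : Set V)ᶜ)).ConnectedComponent, C ≠ D →
      ((edgesToCut C : ℝ) / (compSize C : ℝ) - μ) * (compSize D : ℝ)
        + ((edgesToCut D : ℝ) / (compSize D : ℝ) - μ) * (compSize C : ℝ) ≥ 0 := by
    intro C D hCD
    obtain ⟨vc, hvc⟩ := C.exists_rep
    obtain ⟨vd, hvd⟩ := D.exists_rep
    have hicC : inComp G U C vc.1 := ⟨vc.2, hvc⟩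
    have hicD : inComp G U D vd.1 := ⟨vd.2, hvd⟩
    haveI : Nonempty V := ⟨vc.1⟩
    have hne : vc.1 ≠ vd.1 := by
      intro h
      exact hCD (inComp.eq_of_both hicC (h ▸ hicD))
    have hV : 1 < Fintype.card V := Fintype.one_lt_card_iff_nontrivial.mpr ⟨⟨vc.1, vd.1, hne⟩⟩
    set hC : ℝ := (compSize C : ℝ) with hhC
    set hD : ℝ := (compSize D : ℝ) with hhD
    set eC : ℝ := (edgesToCut C : ℝ) with heC
    set eD : ℝ := (edgesToCut D : ℝ) with heD
    have hCpos : (0:ℝ) < hC := by rw [hhC]; exact_mod_cast compSize_pos C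
    have hDpos : (0:ℝ) < hD := by rw [hhD]; exact_mod_cast compSize_pos D
    -- the test vector
    set x : V → ℝ := fun v => hD * (if inComp G U C v then 1 else 0)
      - hC * (if inComp G U D v then 1 else 0) with hxdef
    have hxU : ∀ v, v ∈ U → x v = 0 := by
      intro v hv
      have h1 : ¬ inComp G U C v := fun h => h.not_mem_U hv
      have h2 : ¬ inComp G U D v := fun h => h.not_mem_U hv
      simp [hxdef, h1, h2]
    have hxsum : ∑ v, x v = 0 := by
      rw [hxdef]
      simp only
      rw [Finset.sum_sub_distrib, ← Finset.mul_sum, ← Finset.mul_sum,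
        ← compSize_eq C, ← compSize_eq D, ← hhC, ← hhD]
      ring
    have hxx : x ⬝ᵥ x = hD^2 * hC + hC^2 * hD := by
      rw [dotProduct]
      have hterm : ∀ v, x v * x v = hD^2 * (if inComp G U C v then (1:ℝ) else 0)
          + hC^2 * (if inComp G U D v then (1:ℝ) else 0) := by
        intro v
        by_cases h1 : inComp G U C v <;> by_cases h2 : inComp G U D v
        · exact absurd (inComp.eq_of_both h1 h2) hCD
        all_goals simp [hxdef, h1, h2] <;> ring
      simp_rw [hterm]
      rw [Finset.sum_add_distrib, ← Finset.mul_sum, ← Finset.mul_sum,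
        ← compSize_eq C, ← compSize_eq D, ← hhC, ← hhD]
    have hquad : x ⬝ᵥ (G.lapMatrix ℝ *ᵥ x) = eC * hD^2 + eD * hC^2 := by
      rw [← Matrix.toLinearMap₂'_apply', G.lapMatrix_toLinearMap₂' ℝ]
      have hterm : ∀ i j, (if G.Adj i j then (x i - x j)^2 else 0) =
          hD^2 * ((if inComp G U C i ∧ j ∈ U ∧ G.Adj i j then (1:ℝ) else 0)
            + (if inComp G U C j ∧ i ∈ U ∧ G.Adj j i then (1:ℝ) else 0))
          + hC^2 * ((if inComp G U D i ∧ j ∈ U ∧ G.Adj i j then (1:ℝ) else 0)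
            + (if inComp G U D j ∧ i ∈ U ∧ G.Adj j i then (1:ℝ) else 0)) := by
        intro i j
        by_cases hadj : G.Adj i j
        · have hadj' : G.Adj j i := hadj.symm
          by_cases hi : i ∈ U <;> by_cases hj : j ∈ U
          · have h1 : ¬ inComp G U C i := fun h => h.not_mem_U hi
            have h2 : ¬ inComp G U C j := fun h => h.not_mem_U hj
            have h3 : ¬ inComp G U D i := fun h => h.not_mem_U hi
            have h4 : ¬ inComp G U D j := fun h => h.not_mem_U hj
            simp [hadj, hxU i hi, hxU j hj, h1, h2, h3, h4]
          · -- i ∈ U, j ∉ U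
            have h1 : ¬ inComp G U C i := fun h => h.not_mem_U hi
            have h3 : ¬ inComp G U D i := fun h => h.not_mem_U hi
            rw [if_pos hadj, hxU i hi]
            by_cases h2 : inComp G U C j <;> by_cases h4 : inComp G U D j
            · exact absurd (inComp.eq_of_both h2 h4) hCD
            all_goals simp [hxdef, h1, h2, h3, h4, hi, hj, hadj, hadj'] <;> ring
          · -- i ∉ U, j ∈ U
            have h2 : ¬ inComp G U C j := fun h => h.not_mem_U hj
            have h4 : ¬ inComp G U D j := fun h => h.not_mem_U hj
            rw [if_pos hadj, hxU j hj]
            by_cases h1 : inComp G U C i <;> by_cases h3 : inComp G U D i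
            · exact absurd (inComp.eq_of_both h1 h3) hCD
            all_goals simp [hxdef, h1, h2, h3, h4, hi, hj, hadj, hadj'] <;> ring
          · -- both outside U
            have hxeq : x i = x j := by
              have e1 : inComp G U C i ↔ inComp G U C j := inComp_iff_of_adj hi hj hadj
              have e2 : inComp G U D i ↔ inComp G U D j := inComp_iff_of_adj hi hj hadj
              simp only [hxdef]
              rw [if_congr e1 rfl rfl, if_congr e2 rfl rfl]
            simp [hadj, hxeq, hi, hj]
        · have hadj' : ¬ G.Adj j i := fun h => hadj h.symm
          simp [hadj, hadj']
      simp_rw [hterm]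
      simp_rw [mul_add, Finset.sum_add_distrib, ← Finset.mul_sum]
      rw [show (∑ i : V, ∑ j : V, if inComp G U C j ∧ i ∈ U ∧ G.Adj j i then (1:ℝ) else 0)
          = ∑ j : V, ∑ i : V, if inComp G U C j ∧ i ∈ U ∧ G.Adj j i then (1:ℝ) else 0
          from Finset.sum_comm,
        show (∑ i : V, ∑ j : V, if inComp G U D j ∧ i ∈ U ∧ G.Adj j i then (1:ℝ) else 0)
          = ∑ j : V, ∑ i : V, if inComp G U D j ∧ i ∈ U ∧ G.Adj j i then (1:ℝ) else 0
          from Finset.sum_comm, ← edgesToCut_eq C, ← edgesToCut_eq D, ← heC, ← heD]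
      ring
    have hray := rayleigh hconn hV x hxsum
    rw [hxx, hquad, ← hμ] at hray
    have expand : (eC/hC - μ) * hD + (eD/hD - μ) * hC
        = (eC * hD^2 + eD * hC^2 - μ * (hD^2 * hC + hC^2 * hD)) / (hC * hD) := by
      field_simp
      ring
    rw [ge_iff_le, expand]
    apply div_nonneg (by linarith) (by positivity)
  refine ⟨key, ?_⟩
  intro C hCs D hDs
  by_contra hne
  have h1 := key C D hne
  have hCpos : (0:ℝ) < (compSize C : ℝ) := by exact_mod_cast compSize_pos C
  have hDpos : (0:ℝ) < (compSize D : ℝ) := by exact_mod_cast compSize_pos D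
  simp only [Set.mem_setOf_eq] at hCs hDs
  nlinarith [hCs, hDs]
end
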